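/- A finite metric space (X,d) is a tree metric (embeds isometrically into a weighted tree) if and only if its hyperbolicity is 0, i.e., for every four points the two larger of the three distance sums are equal (the four-point condition). -/

import Mathlib

/-- The hyperbolicity (S3 - S2)/2 of a quadruple of points in a metric space,
where S1 ≤ S2 ≤ S3 are the three distance sums d(u,v)+d(w,x), d(u,w)+d(v,x),
d(u,x)+d(v,w) in nondecreasing order (S3 - S2 = 2·max + min - (S1+S2+S3)). -/
noncomputable def metricDelta4 {X : Type*} [MetricSpace X] (u v w x : X) : ℝ :=
  let A := dist u v + dist w x
  let B := dist u w + dist v x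
  let C := dist u x + dist v w
  (2 * max A (max B C) + min A (min B C) - (A + B + C)) / 2

set_option linter.unusedSectionVars false
set_option linter.unusedVariables false
set_option linter.unreachableTactic false
set_option linter.unusedTactic false
set_option maxHeartbeats 1000000

open SimpleGraph


-- real arithmetic helpers
lemma delta_zero_of_ineqs (A B C : ℝ) (h1 : A ≤ max B C) (h2 : B ≤ max A C)
    (h3 : C ≤ max A B) :
    (2 * max A (max B C) + min A (min B C) - (A + B + C)) / 2 = 0 := by
  simp only [max_def, min_def] at *
  split_ifs at * <;> linarith

lemma ineq_of_delta_zero (A B C : ℝ)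
    (h : (2 * max A (max B C) + min A (min B C) - (A + B + C)) / 2 = 0) : A ≤ max B C := by
  simp only [max_def, min_def] at *
  split_ifs at * <;> linarith



open SimpleGraph

variable {W : Type} [DecidableEq W] {T : SimpleGraph W}

noncomputable def TreePth (hT : T.IsTree) (a b : W) : T.Walk a b :=
  (hT.existsUnique_path a b).choose

lemma TreePth_isPath (hT : T.IsTree) (a b : W) : (TreePth hT a b).IsPath :=
  (hT.existsUnique_path a b).choose_spec.1

lemma TreePth_unique (hT : T.IsTree) {a b : W} (p : T.Walk a b) (hp : p.IsPath) :
    p = TreePth hT a b :=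
  (hT.existsUnique_path a b).choose_spec.2 p hp

def TreeSep (hT : T.IsTree) (e : Sym2 W) (a b : W) : Prop := e ∈ (TreePth hT a b).edges

lemma TreeSep_symm (hT : T.IsTree) {e : Sym2 W} {a b : W} (h : TreeSep hT e a b) :
    TreeSep hT e b a := by
  have : (TreePth hT a b).reverse = TreePth hT b a :=
    TreePth_unique hT _ ((TreePth_isPath hT a b).reverse)
  unfold TreeSep at *
  rw [← this, Walk.edges_reverse, List.mem_reverse]
  exact h

lemma TreeSep_symm_iff (hT : T.IsTree) {e : Sym2 W} {a b : W} :
    TreeSep hT e a b ↔ TreeSep hT e b a :=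
  ⟨TreeSep_symm hT, TreeSep_symm hT⟩

lemma not_TreeSep_self (hT : T.IsTree) (e : Sym2 W) (a : W) : ¬ TreeSep hT e a a := by
  have : (Walk.nil : T.Walk a a) = TreePth hT a a := TreePth_unique hT _ (by simp)
  unfold TreeSep
  rw [← this]
  simp

lemma TreeSep_avoid_trans (hT : T.IsTree) {e : Sym2 W} {a b c : W}
    (h1 : ¬ TreeSep hT e a c) (h2 : ¬ TreeSep hT e c b) : ¬ TreeSep hT e a b := by
  intro h
  have hb : ((TreePth hT a c).append (TreePth hT c b)).bypass = TreePth hT a b :=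
    TreePth_unique hT _ (Walk.bypass_isPath _)
  unfold TreeSep at h
  rw [← hb] at h
  have := Walk.edges_bypass_subset _ h
  rw [Walk.edges_append, List.mem_append] at this
  tauto

lemma TreeSep_sub_take (hT : T.IsTree) {e : Sym2 W} {a b c : W}
    (hc : c ∈ (TreePth hT a b).support) (h : ¬ TreeSep hT e a b) : ¬ TreeSep hT e a c := by
  intro h'
  have ht : ((TreePth hT a b).takeUntil c hc) = TreePth hT a c :=
    TreePth_unique hT _ ((TreePth_isPath hT a b).takeUntil hc)
  unfold TreeSep at h'
  rw [← ht] at h'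
  exact h (Walk.edges_takeUntil_subset _ hc h')

lemma TreeSep_split (hT : T.IsTree) {e : Sym2 W} {a b c : W}
    (hc : c ∈ (TreePth hT a b).support) (h : TreeSep hT e a b) :
    TreeSep hT e a c ∨ TreeSep hT e c b := by
  have hsp := Walk.take_spec (TreePth hT a b) hc
  have ht : ((TreePth hT a b).takeUntil c hc) = TreePth hT a c :=
    TreePth_unique hT _ ((TreePth_isPath hT a b).takeUntil hc)
  have hd : ((TreePth hT a b).dropUntil c hc) = TreePth hT c b :=
    TreePth_unique hT _ ((TreePth_isPath hT a b).dropUntil hc)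
  unfold TreeSep at *
  rw [← hsp, Walk.edges_append, List.mem_append] at h
  rw [← ht, ← hd]
  exact h

lemma TreeSep_not_both (hT : T.IsTree) {e : Sym2 W} {a b c : W}
    (hc : c ∈ (TreePth hT a b).support) :
    ¬ (TreeSep hT e a c ∧ TreeSep hT e c b) := by
  rintro ⟨h1, h2⟩
  have hsp := Walk.take_spec (TreePth hT a b) hc
  have ht : ((TreePth hT a b).takeUntil c hc) = TreePth hT a c :=
    TreePth_unique hT _ ((TreePth_isPath hT a b).takeUntil hc)
  have hd : ((TreePth hT a b).dropUntil c hc) = TreePth hT c b :=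
    TreePth_unique hT _ ((TreePth_isPath hT a b).dropUntil hc)
  have hnd : (TreePth hT a b).edges.Nodup := (TreePth_isPath hT a b).isTrail.edges_nodup
  rw [← hsp, Walk.edges_append, List.nodup_append] at hnd
  unfold TreeSep at h1 h2
  rw [← ht] at h1
  rw [← hd] at h2
  exact hnd.2.2 _ h1 _ h2 rfl

/-- cut structure: `sep e a b` iff exactly one of `a`, `b` is on the `q`-side of `e = s(p,q)`. -/
lemma TreeSep_cut (hT : T.IsTree) {p q : W} {a b : W} :
    TreeSep hT s(p,q) a b ↔ Xor' (TreeSep hT s(p,q) a q) (TreeSep hT s(p,q) b q) := by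
  constructor
  · intro h
    have hq : q ∈ (TreePth hT a b).support :=
      Walk.snd_mem_support_of_mem_edges _ h
    have hsplit := TreeSep_split hT hq h
    have hnb := TreeSep_not_both hT (e := s(p,q)) hq
    rcases hsplit with h1 | h2
    · exact Or.inl ⟨h1, fun hbq => hnb ⟨h1, TreeSep_symm hT hbq⟩⟩
    · exact Or.inr ⟨TreeSep_symm hT h2, fun haq => hnb ⟨haq, h2⟩⟩
  · intro h
    by_contra hab
    rcases h with ⟨haq, hbq⟩ | ⟨hbq, haq⟩
    · exact (TreeSep_avoid_trans hT hab hbq) haq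
    · exact (TreeSep_avoid_trans hT (fun h' => hab (TreeSep_symm hT h')) haq) hbq

lemma TreeSep_exclusion (hT : T.IsTree) {e1 e2 : Sym2 W} {a b c d : W}
    (h1ab : TreeSep hT e1 a b) (h1cd : TreeSep hT e1 c d) (h1ac : ¬ TreeSep hT e1 a c)
    (h2ab : TreeSep hT e2 a b) (h2cd : TreeSep hT e2 c d) (h2ad : ¬ TreeSep hT e2 a d) :
    False := by
  induction e2 using Sym2.ind with | _ p2 q2 =>
  have cut2 : ∀ g h : W, TreeSep hT s(p2,q2) g h ↔
      Xor' (TreeSep hT s(p2,q2) g q2) (TreeSep hT s(p2,q2) h q2) :=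
    fun g h => TreeSep_cut hT
  have h2ac : TreeSep hT s(p2,q2) a c := by
    rw [cut2 a b] at h2ab; rw [cut2 c d] at h2cd; rw [cut2 a d] at h2ad; rw [cut2 a c]
    unfold Xor' Xor at *; tauto
  have h2bd : TreeSep hT s(p2,q2) b d := by
    rw [cut2 a b] at h2ab; rw [cut2 c d] at h2cd; rw [cut2 a d] at h2ad; rw [cut2 b d]
    unfold Xor' Xor at *; tauto
  have h1bd : ¬ TreeSep hT e1 b d := by
    induction e1 using Sym2.ind with | _ p1 q1 =>
    have cut1 : ∀ g h : W, TreeSep hT s(p1,q1) g h ↔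
        Xor' (TreeSep hT s(p1,q1) g q1) (TreeSep hT s(p1,q1) h q1) :=
      fun g h => TreeSep_cut hT
    rw [cut1 a b] at h1ab; rw [cut1 c d] at h1cd; rw [cut1 a c] at h1ac; rw [cut1 b d]
    unfold Xor' Xor at *; tauto
  have hp2ac : p2 ∈ (TreePth hT a c).support := Walk.fst_mem_support_of_mem_edges _ h2ac
  have hp2bd : p2 ∈ (TreePth hT b d).support := Walk.fst_mem_support_of_mem_edges _ h2bd
  have h1ap2 : ¬ TreeSep hT e1 a p2 := TreeSep_sub_take hT hp2ac h1ac
  have h1bp2 : ¬ TreeSep hT e1 b p2 := TreeSep_sub_take hT hp2bd h1bd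
  exact (TreeSep_avoid_trans hT h1ap2 (fun h' => h1bp2 (TreeSep_symm hT h'))) h1ab

open scoped Classical in
lemma TreeSep_pointwise (hT : T.IsTree) (wt : Sym2 W → ℝ) (hwt : ∀ e, 0 ≤ wt e)
    {a b c d : W} (e : Sym2 W)
    (hblock : ¬ (TreeSep hT e a b ∧ TreeSep hT e c d ∧ ¬ TreeSep hT e a c)) :
    (if TreeSep hT e a b then wt e else 0) + (if TreeSep hT e c d then wt e else 0)
      ≤ (if TreeSep hT e a c then wt e else 0) + (if TreeSep hT e b d then wt e else 0) := by
  induction e using Sym2.ind with | _ p q =>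
  have cut : ∀ g h : W, TreeSep hT s(p,q) g h ↔
      Xor' (TreeSep hT s(p,q) g q) (TreeSep hT s(p,q) h q) :=
    fun g h => TreeSep_cut hT
  have hw := hwt s(p,q)
  rw [cut a b, cut c d, cut a c, cut b d]
  rw [cut a b, cut c d, cut a c] at hblock
  clear cut
  by_cases hPa : TreeSep hT s(p,q) a q <;> by_cases hPb : TreeSep hT s(p,q) b q <;>
    by_cases hPc : TreeSep hT s(p,q) c q <;> by_cases hPd : TreeSep hT s(p,q) d q <;>
    simp only [Xor', hPa, hPb, hPc, hPd] at hblock ⊢ <;>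
    simp_all <;> linarith

open scoped Classical in
lemma list_sum_eq_finset_sum {α : Type} [DecidableEq α] (wt : α → ℝ) :
    ∀ (l : List α), l.Nodup → (l.map wt).sum = ∑ e ∈ l.toFinset, wt e := by
  intro l
  induction l with
  | nil => simp
  | cons a l ih =>
    intro h
    rw [List.nodup_cons] at h
    simp only [List.map_cons, List.sum_cons, List.toFinset_cons]
    rw [Finset.sum_insert (by simpa using h.1), ih h.2]

open scoped Classical in
lemma treeDist_eq_sum [Fintype W] (hT : T.IsTree) (wt : Sym2 W → ℝ) (a b : W) :
    ((TreePth hT a b).edges.map wt).sum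
      = ∑ e : Sym2 W, if TreeSep hT e a b then wt e else 0 := by
  rw [list_sum_eq_finset_sum wt _ (TreePth_isPath hT a b).isTrail.edges_nodup,
    ← Finset.sum_filter]
  congr 1
  ext e
  rw [Finset.mem_filter, List.mem_toFinset]
  simp [TreeSep]

open scoped Classical in
lemma tree_fourpoint [Fintype W] (hT : T.IsTree) (wt : Sym2 W → ℝ) (hwt : ∀ e, 0 ≤ wt e)
    (dT : W → W → ℝ)
    (hdT : ∀ (a b : W) (p : T.Walk a b), p.IsPath → dT a b = (p.edges.map wt).sum)
    (a b c d : W) :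
    dT a b + dT c d ≤ max (dT a c + dT b d) (dT a d + dT b c) := by
  have hd : ∀ g h : W, dT g h = ∑ e : Sym2 W, if TreeSep hT e g h then wt e else 0 :=
    fun g h => by rw [hdT g h _ (TreePth_isPath hT g h), treeDist_eq_sum]
  rw [hd a b, hd c d, hd a c, hd b d, hd a d, hd b c,
    ← Finset.sum_add_distrib, ← Finset.sum_add_distrib, ← Finset.sum_add_distrib]
  by_cases hB0 : ∃ e1 : Sym2 W, TreeSep hT e1 a b ∧ TreeSep hT e1 c d ∧ ¬ TreeSep hT e1 a c
  · refine le_max_of_le_right (Finset.sum_le_sum ?_)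
    rintro e -
    obtain ⟨e1, h1ab, h1cd, h1ac⟩ := hB0
    have hblock : ¬ (TreeSep hT e a b ∧ TreeSep hT e c d ∧ ¬ TreeSep hT e a d) :=
      fun ⟨h2ab, h2cd, h2ad⟩ => TreeSep_exclusion hT h1ab h1cd h1ac h2ab h2cd h2ad
    have := TreeSep_pointwise hT wt hwt (a := a) (b := b) (c := d) (d := c) e
      (by rw [TreeSep_symm_iff hT (a := d) (b := c)]; exact hblock)
    calc (if TreeSep hT e a b then wt e else 0) + (if TreeSep hT e c d then wt e else 0)
        = (if TreeSep hT e a b then wt e else 0) + (if TreeSep hT e d c then wt e else 0) := by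
          rw [TreeSep_symm_iff hT (a := c) (b := d)]
      _ ≤ (if TreeSep hT e a d then wt e else 0) + (if TreeSep hT e b c then wt e else 0) :=
          this
  · refine le_max_of_le_left (Finset.sum_le_sum ?_)
    push_neg at hB0
    rintro e -
    exact TreeSep_pointwise hT wt hwt e (fun ⟨h1, h2, h3⟩ => h3 (hB0 e h1 h2))




namespace TreeConstr

variable {X : Type} [MetricSpace X] [Fintype X]

/-- Gromov product at basepoint `r`. -/
noncomputable def gp (r x y : X) : ℝ := (dist x r + dist y r - dist x y) / 2

lemma gp_comm (r x y : X) : gp r x y = gp r y x := by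
  unfold gp; rw [dist_comm x y]; ring

lemma gp_nonneg (r x y : X) : 0 ≤ gp r x y := by
  unfold gp
  have := dist_triangle x r y
  have h2 : dist r y = dist y r := dist_comm r y
  linarith

lemma gp_le (r x y : X) : gp r x y ≤ dist x r := by
  unfold gp
  have := dist_triangle y x r
  have h2 : dist y x = dist x y := dist_comm y x
  linarith

lemma gp_self (r x : X) : gp r x x = dist x r := by
  unfold gp; simp

/-- The finite set of levels available to `x`. -/
noncomputable def lvls (r x : X) : Finset ℝ :=
  insert 0 (Finset.univ.image (gp r x))

lemma zero_mem_lvls (r x : X) : (0:ℝ) ∈ lvls r x := Finset.mem_insert_self _ _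

lemma gp_mem_lvls (r x y : X) : gp r x y ∈ lvls r x :=
  Finset.mem_insert_of_mem (Finset.mem_image_of_mem _ (Finset.mem_univ y))

lemma dist_mem_lvls (r x : X) : dist x r ∈ lvls r x := by
  have := gp_mem_lvls r x x
  rwa [gp_self] at this

lemma mem_lvls_nonneg {r x : X} {t : ℝ} (h : t ∈ lvls r x) : 0 ≤ t := by
  rcases Finset.mem_insert.mp h with h | h
  · simp [h]
  · obtain ⟨y, -, rfl⟩ := Finset.mem_image.mp h
    exact gp_nonneg r x y

lemma mem_lvls_le {r x : X} {t : ℝ} (h : t ∈ lvls r x) : t ≤ dist x r := by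
  rcases Finset.mem_insert.mp h with h | h
  · simp [h, dist_nonneg]
  · obtain ⟨y, -, rfl⟩ := Finset.mem_image.mp h
    exact gp_le r x y

variable (r : X)

/-- Vertex representatives. -/
def Vtx : Type := {p : X × ℝ // p.2 ∈ lvls r p.1}

noncomputable instance : Fintype (Vtx r) := by
  have : Finite (Vtx r) := by
    let F : Vtx r → X × (Finset.univ.biUnion (lvls r) : Finset ℝ) := fun p =>
      (p.1.1, ⟨p.1.2, Finset.mem_biUnion.mpr ⟨p.1.1, Finset.mem_univ _, p.2⟩⟩)
    apply Finite.of_injective F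
    rintro ⟨⟨x, t⟩, h⟩ ⟨⟨y, s⟩, h'⟩ hF
    simp only [F, Prod.mk.injEq, Subtype.mk.injEq] at hF
    obtain ⟨rfl, rfl⟩ := hF; rfl
  exact Fintype.ofFinite _

variable (hG : ∀ x y z : X, min (gp r x z) (gp r z y) ≤ gp r x y)

/-- The dendrogram equivalence: same level, and level below the Gromov product. -/
def VSetoid : Setoid (Vtx r) where
  r := fun p q => p.1.2 = q.1.2 ∧ p.1.2 ≤ gp r p.1.1 q.1.1
  iseqv := by
    constructor
    · rintro ⟨⟨x, t⟩, h⟩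
      exact ⟨rfl, by simpa [gp_self] using mem_lvls_le h⟩
    · rintro ⟨⟨x, t⟩, h⟩ ⟨⟨y, s⟩, h'⟩ ⟨h1, h2⟩
      refine ⟨h1.symm, ?_⟩
      rw [← h1, gp_comm]
      exact h2
    · rintro ⟨⟨x, t⟩, h⟩ ⟨⟨y, s⟩, h'⟩ ⟨⟨z, u⟩, h''⟩ ⟨h1, h2⟩ ⟨h3, h4⟩
      simp only at h1 h2 h3 h4 ⊢
      exact ⟨h1.trans h3, le_trans (le_min h2 (by rw [h1]; exact h4)) (hG x z y)⟩

/-- The tree vertex set. -/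
def WQ : Type := Quotient (VSetoid r hG)

noncomputable instance : Fintype (WQ r hG) := by
  have : Finite (WQ r hG) :=
    Finite.of_surjective (fun p : Vtx r => (Quotient.mk (VSetoid r hG) p : WQ r hG))
      (fun q => Quotient.exists_rep q)
  exact Fintype.ofFinite _

/-- Make a vertex. -/
def mkW (x : X) (t : ℝ) (h : t ∈ lvls r x) : WQ r hG := Quotient.mk (VSetoid r hG) ⟨(x, t), h⟩

lemma mkW_eq_iff {x y : X} {t s : ℝ} (h : t ∈ lvls r x) (h' : s ∈ lvls r y) :
    mkW r hG x t h = mkW r hG y s h' ↔ t = s ∧ t ≤ gp r x y :=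
  ⟨fun he => Quotient.exact he, fun hr => Quotient.sound hr⟩

/-- Level of a vertex. -/
noncomputable def lv : WQ r hG → ℝ :=
  Quotient.lift (fun p : Vtx r => p.1.2) (fun _ _ h => h.1)

@[simp] lemma lv_mkW (x : X) (t : ℝ) (h : t ∈ lvls r x) : lv r hG (mkW r hG x t h) = t := rfl

lemma lv_nonneg (v : WQ r hG) : 0 ≤ lv r hG v := by
  induction v using Quotient.ind with | _ p =>
  exact mem_lvls_nonneg p.2

lemma exists_rep (v : WQ r hG) : ∃ (x : X) (t : ℝ) (h : t ∈ lvls r x),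
    v = mkW r hG x t h ∧ lv r hG v = t := by
  induction v using Quotient.ind with | _ p =>
  exact ⟨p.1.1, p.1.2, p.2, rfl, rfl⟩

/-- The root. -/
def root : WQ r hG := mkW r hG r 0 (zero_mem_lvls r r)

lemma lv_root : lv r hG (root r hG) = 0 := rfl

lemma eq_root_of_lv_eq_zero {v : WQ r hG} (h : lv r hG v = 0) : v = root r hG := by
  obtain ⟨x, t, ht, rfl, hl⟩ := exists_rep r hG v
  have h0 : t = 0 := by simpa using h
  exact (mkW_eq_iff r hG _ _).mpr ⟨h0, by rw [h0]; exact gp_nonneg r x r⟩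

lemma below_nonempty (x : X) {t : ℝ} (ht : 0 < t) :
    ((lvls r x).filter (fun u => u < t)).Nonempty :=
  ⟨0, Finset.mem_filter.mpr ⟨zero_mem_lvls r x, ht⟩⟩

/-- previous level: the largest level of `x` strictly below `t`. -/
noncomputable def prevLvl (x : X) (t : ℝ) (ht : 0 < t) : ℝ :=
  ((lvls r x).filter (fun u => u < t)).max' (below_nonempty r x ht)

lemma prevLvl_mem_filter (x : X) {t : ℝ} (ht : 0 < t) :
    prevLvl r x t ht ∈ (lvls r x).filter (fun u => u < t) :=
  Finset.max'_mem ((lvls r x).filter (fun u => u < t)) (below_nonempty r x ht)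

lemma prevLvl_mem (x : X) {t : ℝ} (ht : 0 < t) : prevLvl r x t ht ∈ lvls r x :=
  (Finset.mem_filter.mp (prevLvl_mem_filter r x ht)).1

lemma prevLvl_lt (x : X) {t : ℝ} (ht : 0 < t) : prevLvl r x t ht < t :=
  (Finset.mem_filter.mp (prevLvl_mem_filter r x ht)).2

lemma le_prevLvl (x : X) {t s : ℝ} (ht : 0 < t) (hs : s ∈ lvls r x) (hst : s < t) :
    s ≤ prevLvl r x t ht :=
  Finset.le_max' ((lvls r x).filter (fun u => u < t)) s (Finset.mem_filter.mpr ⟨hs, hst⟩)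

include hG in
/-- Level transfer: below the Gromov product, `x` and `y` have the same levels. -/
lemma lvls_transfer {x y : X} {t s : ℝ} (hty : t ≤ gp r x y) (hst : s < t)
    (hs : s ∈ lvls r x) : s ∈ lvls r y := by
  rcases Finset.mem_insert.mp hs with h | h
  · rw [h]; exact zero_mem_lvls r y
  · obtain ⟨z, -, rfl⟩ := Finset.mem_image.mp h
    have hxy : gp r x z < gp r x y := lt_of_lt_of_le hst hty
    have h1 : gp r x z ≤ gp r y z := by
      have := hG y z x
      rw [min_le_iff] at this
      rcases this with h' | h'
      · -- gp r y x ≤ gp r y z; but gp r y x = gp r x y > gp r x z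
        rw [gp_comm r y x] at h'
        linarith
      · exact h'
    have h2 : gp r y z ≤ gp r x z := by
      have := hG x z y
      rw [min_le_iff] at this
      rcases this with h' | h'
      · linarith
      · exact h'
    have : gp r y z = gp r x z := le_antisymm h2 h1
    rw [← this]
    exact gp_mem_lvls r y z

include hG in
lemma prevLvl_congr {x y : X} {t : ℝ} (ht : 0 < t) (hty : t ≤ gp r x y) :
    prevLvl r x t ht = prevLvl r y t ht := by
  unfold prevLvl
  congr 1
  ext u
  simp only [Finset.mem_filter, and_congr_left_iff]
  intro hu
  constructor
  · intro h; exact lvls_transfer r hG hty hu h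
  · intro h; exact lvls_transfer r hG (by rw [gp_comm]; exact hty) hu h

/-- Parent function. -/
noncomputable def parent : WQ r hG → WQ r hG :=
  Quotient.lift
    (fun p : Vtx r =>
      if ht : 0 < p.1.2 then mkW r hG p.1.1 (prevLvl r p.1.1 p.1.2 ht) (prevLvl_mem r _ ht)
      else root r hG)
    (by
      rintro ⟨⟨x, t⟩, hx⟩ ⟨⟨y, s⟩, hy⟩ ⟨h1, h2⟩
      simp only at h1 h2 ⊢
      subst h1
      by_cases ht : 0 < t
      · rw [dif_pos ht, dif_pos ht]
        have hpc := prevLvl_congr r hG ht h2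
        rw [mkW_eq_iff]
        refine ⟨hpc, le_trans (le_of_lt (prevLvl_lt r x ht)) h2⟩
      · rw [dif_neg ht, dif_neg ht])

lemma parent_mkW (x : X) (t : ℝ) (h : t ∈ lvls r x) (ht : 0 < t) :
    parent r hG (mkW r hG x t h) =
      mkW r hG x (prevLvl r x t ht) (prevLvl_mem r _ ht) := by
  unfold parent mkW
  exact dif_pos ht

lemma parent_root : parent r hG (root r hG) = root r hG := by
  unfold parent root mkW
  exact dif_neg (by norm_num)

lemma parent_of_root_lv {v : WQ r hG} (h : ¬ 0 < lv r hG v) : parent r hG v = root r hG := by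
  have h0 : lv r hG v = 0 := le_antisymm (not_lt.mp h) (lv_nonneg r hG v)
  rw [eq_root_of_lv_eq_zero r hG h0, parent_root]

lemma lv_parent_lt {v : WQ r hG} (h : v ≠ root r hG) :
    lv r hG (parent r hG v) < lv r hG v := by
  obtain ⟨x, t, ht, rfl, -⟩ := exists_rep r hG v
  have htpos : 0 < t := by
    rcases lt_or_eq_of_le (mem_lvls_nonneg ht) with h' | h'
    · exact h'
    · exact absurd (eq_root_of_lv_eq_zero r hG (by simp [← h'])) h
  rw [parent_mkW r hG x t ht htpos, lv_mkW, lv_mkW]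
  exact prevLvl_lt r x htpos

lemma lv_parent_le (v : WQ r hG) : lv r hG (parent r hG v) ≤ lv r hG v := by
  by_cases h : v = root r hG
  · rw [h, parent_root]
  · exact le_of_lt (lv_parent_lt r hG h)

/-- The dendrogram graph: each non-root vertex is joined to its parent. -/
def TG : SimpleGraph (WQ r hG) where
  Adj a b := a ≠ b ∧ (parent r hG a = b ∨ parent r hG b = a)
  symm := by constructor; rintro a b ⟨h1, h2⟩; exact ⟨h1.symm, h2.symm⟩
  loopless := by constructor; rintro a ⟨h1, -⟩; exact h1 rfl

lemma adj_parent {v : WQ r hG} (h : v ≠ root r hG) :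
    (TG r hG).Adj v (parent r hG v) := by
  refine ⟨fun he => ?_, Or.inl rfl⟩
  · have := lv_parent_lt r hG h
    rw [← he] at this
    exact lt_irrefl _ this

lemma reach_root : ∀ (n : ℕ) (v : WQ r hG),
    (Finset.univ.filter (fun u => lv r hG u < lv r hG v)).card ≤ n →
    (TG r hG).Reachable v (root r hG) := by
  intro n
  induction n with
  | zero =>
    intro v hv
    by_cases h : v = root r hG
    · rw [h]
    · exfalso
      have hmem : parent r hG v ∈ Finset.univ.filter (fun u => lv r hG u < lv r hG v) :=
        Finset.mem_filter.mpr ⟨Finset.mem_univ _, lv_parent_lt r hG h⟩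
      have := Finset.card_pos.mpr ⟨_, hmem⟩
      omega
  | succ n ih =>
    intro v hv
    by_cases h : v = root r hG
    · rw [h]
    · have hstep : (TG r hG).Reachable v (parent r hG v) := (adj_parent r hG h).reachable
      refine hstep.trans (ih (parent r hG v) ?_)
      have hsub : Finset.univ.filter (fun u => lv r hG u < lv r hG (parent r hG v)) ⊆
          Finset.univ.filter (fun u => lv r hG u < lv r hG v) := by
        intro u hu
        rw [Finset.mem_filter] at hu ⊢
        exact ⟨hu.1, lt_of_lt_of_le hu.2 (lv_parent_le r hG v)⟩
      have hmem : parent r hG v ∈ Finset.univ.filter (fun u => lv r hG u < lv r hG v) :=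
        Finset.mem_filter.mpr ⟨Finset.mem_univ _, lv_parent_lt r hG h⟩
      have hnotmem : parent r hG v ∉
          Finset.univ.filter (fun u => lv r hG u < lv r hG (parent r hG v)) := by
        rw [Finset.mem_filter]
        rintro ⟨-, h'⟩
        exact lt_irrefl _ h'
      have := Finset.card_lt_card (Finset.ssubset_iff_of_subset hsub |>.mpr ⟨_, hmem, hnotmem⟩)
      omega

lemma TG_connected : (TG r hG).Connected := by
  rw [connected_iff]
  refine ⟨fun a b => ?_, ⟨root r hG⟩⟩
  exact (reach_root r hG _ a le_rfl).trans (reach_root r hG _ b le_rfl).symm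

lemma lv_parentIter_le (k : ℕ) (v : WQ r hG) :
    lv r hG ((parent r hG)^[k] v) ≤ lv r hG v := by
  induction k with
  | zero => simp
  | succ k ih =>
    rw [Function.iterate_succ_apply']
    exact le_trans (lv_parent_le r hG _) ih

lemma bridge_parent {v : WQ r hG} (hv : v ≠ parent r hG v) :
    (TG r hG).IsBridge s(v, parent r hG v) := by
  have hvroot : v ≠ root r hG := by
    intro h
    rw [h, parent_root] at hv
    exact hv rfl
  rw [isBridge_iff]
  intro hr
  -- every vertex reachable from v avoiding the edge has v in its parent chain
  have key : ∀ (a b : WQ r hG)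
      (w : ((TG r hG) \ fromEdgeSet {s(v, parent r hG v)}).Walk a b),
      (∃ j, (parent r hG)^[j] a = v) → ∃ k, (parent r hG)^[k] b = v := by
    intro a b w
    induction w with
    | nil => exact id
    | @cons s y u hadj p ih =>
      rintro ⟨j, hj⟩
      apply ih
      have hne : s(s, y) ≠ s(v, parent r hG v) := by
        have := hadj.2
        simp only [fromEdgeSet_adj, Set.mem_singleton_iff, not_and, not_ne_iff] at this
        intro he
        exact hadj.1.ne (this he)
      obtain ⟨hsy, hpar⟩ := hadj.1
      rcases hpar with hps | hpy
      · -- parent s = y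
        rcases j with _ | j'
        · -- s = v
          simp only [Function.iterate_zero_apply] at hj
          subst hj
          exact absurd (by rw [hps]) hne
        · refine ⟨j', ?_⟩
          rw [← hj, Function.iterate_succ_apply, hps]
      · -- parent y = s
        exact ⟨j + 1, by rw [Function.iterate_succ_apply, hpy, hj]⟩
  obtain ⟨w⟩ := hr
  obtain ⟨k, hk⟩ := key v (parent r hG v) w ⟨0, rfl⟩
  have h1 : lv r hG ((parent r hG)^[k] (parent r hG v)) ≤ lv r hG (parent r hG v) :=
    lv_parentIter_le r hG k _
  rw [hk] at h1
  exact absurd h1 (not_le.mpr (lv_parent_lt r hG hvroot))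

lemma TG_acyclic : (TG r hG).IsAcyclic := by
  rw [isAcyclic_iff_forall_adj_isBridge]
  rintro a b ⟨hne, hpar | hpar⟩
  · have := bridge_parent r hG (v := a) (by rw [hpar]; exact hne)
    rwa [hpar] at this
  · rw [Sym2.eq_swap]
    have := bridge_parent r hG (v := b) (by rw [hpar]; exact hne.symm)
    rwa [hpar] at this

lemma TG_isTree : (TG r hG).IsTree := ⟨TG_connected r hG, TG_acyclic r hG⟩

/-- Edge weights: level differences. -/
noncomputable def twt : Sym2 (WQ r hG) → ℝ :=
  Sym2.lift ⟨fun a b => |lv r hG a - lv r hG b|, fun a b => abs_sub_comm _ _⟩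

lemma twt_nonneg (e : Sym2 (WQ r hG)) : 0 ≤ twt r hG e := by
  induction e using Sym2.ind with | _ a b => exact abs_nonneg _

lemma down_ex : ∀ (n : ℕ) (x : X) (t s : ℝ) (ht : t ∈ lvls r x) (hs : s ∈ lvls r x)
    (hst : s ≤ t),
    ((lvls r x).filter (fun u => s < u ∧ u ≤ t)).card ≤ n →
    ∃ w : (TG r hG).Walk (mkW r hG x t ht) (mkW r hG x s hs),
      w.IsPath ∧ (w.edges.map (twt r hG)).sum = t - s ∧
      ∀ v ∈ w.support, s ≤ lv r hG v ∧ lv r hG v ≤ t ∧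
        ∃ (u : ℝ) (hu : u ∈ lvls r x), v = mkW r hG x u hu := by
  intro n
  induction n with
  | zero =>
    intro x t s ht hs hst hcard
    rcases eq_or_lt_of_le hst with heq | hlt
    · subst heq
      refine ⟨Walk.nil, by simp, by simp, ?_⟩
      intro v hv
      rw [Walk.support_nil, List.mem_singleton] at hv
      subst hv
      exact ⟨le_rfl, le_rfl, s, hs, rfl⟩
    · exfalso
      have : t ∈ (lvls r x).filter (fun u => s < u ∧ u ≤ t) :=
        Finset.mem_filter.mpr ⟨ht, hlt, le_rfl⟩
      have := Finset.card_pos.mpr ⟨_, this⟩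
      omega
  | succ n ih =>
    intro x t s ht hs hst hcard
    rcases eq_or_lt_of_le hst with heq | hlt
    · subst heq
      refine ⟨Walk.nil, by simp, by simp, ?_⟩
      intro v hv
      rw [Walk.support_nil, List.mem_singleton] at hv
      subst hv
      exact ⟨le_rfl, le_rfl, s, hs, rfl⟩
    · have htpos : 0 < t := lt_of_le_of_lt (mem_lvls_nonneg hs) hlt
      have hpmem := prevLvl_mem r x htpos
      have hplt := prevLvl_lt r x htpos
      have hsp : s ≤ prevLvl r x t htpos := le_prevLvl r x htpos hs hlt
      have hadj : (TG r hG).Adj (mkW r hG x t ht) (mkW r hG x _ hpmem) := by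
        refine ⟨fun he => ?_, Or.inl (parent_mkW r hG x t ht htpos)⟩
        have := congrArg (lv r hG) he
        rw [lv_mkW, lv_mkW] at this
        exact absurd this (ne_of_gt hplt)
      have hcard' : ((lvls r x).filter
          (fun u => s < u ∧ u ≤ prevLvl r x t htpos)).card ≤ n := by
        have hsub : (lvls r x).filter (fun u => s < u ∧ u ≤ prevLvl r x t htpos) ⊆
            (lvls r x).filter (fun u => s < u ∧ u ≤ t) := by
          intro u hu
          rw [Finset.mem_filter] at hu ⊢
          exact ⟨hu.1, hu.2.1, le_trans hu.2.2 (le_of_lt hplt)⟩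
        have hmem : t ∈ (lvls r x).filter (fun u => s < u ∧ u ≤ t) :=
          Finset.mem_filter.mpr ⟨ht, hlt, le_rfl⟩
        have hnot : t ∉ (lvls r x).filter (fun u => s < u ∧ u ≤ prevLvl r x t htpos) := by
          rw [Finset.mem_filter]
          rintro ⟨-, -, h'⟩
          exact absurd h' (not_le.mpr hplt)
        have := Finset.card_lt_card (Finset.ssubset_iff_of_subset hsub |>.mpr ⟨t, hmem, hnot⟩)
        omega
      obtain ⟨w', hw'path, hw'sum, hw'supp⟩ := ih x (prevLvl r x t htpos) s hpmem hs hsp hcard'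
      refine ⟨Walk.cons hadj w', ?_, ?_, ?_⟩
      · rw [Walk.cons_isPath_iff]
        refine ⟨hw'path, fun hmem => ?_⟩
        obtain ⟨-, h2, -⟩ := hw'supp _ hmem
        rw [lv_mkW] at h2
        exact absurd h2 (not_le.mpr hplt)
      · rw [Walk.edges_cons, List.map_cons, List.sum_cons, hw'sum]
        have hwt : twt r hG s(mkW r hG x t ht, mkW r hG x _ hpmem) = |t - prevLvl r x t htpos| := rfl
        rw [hwt, abs_of_nonneg (by linarith)]
        ring
      · rw [Walk.support_cons]
        intro v hv
        rcases List.mem_cons.mp hv with rfl | hv'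
        · exact ⟨hst, le_rfl, t, ht, rfl⟩
        · obtain ⟨h1, h2, h3⟩ := hw'supp _ hv'
          exact ⟨h1, le_trans h2 (le_of_lt hplt), h3⟩

/-- The embedding. -/
@[reducible]
noncomputable def fX (x : X) : WQ r hG := mkW r hG x (dist x r) (dist_mem_lvls r x)

lemma dist_path_ex (x y : X) :
    ∃ w : (TG r hG).Walk (fX r hG x) (fX r hG y),
      w.IsPath ∧ (w.edges.map (twt r hG)).sum = dist x y := by
  obtain ⟨w1, h1path, h1sum, h1supp⟩ :=
    down_ex r hG _ x (dist x r) (gp r x y) (dist_mem_lvls r x) (gp_mem_lvls r x y)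
      (gp_le r x y) le_rfl
  obtain ⟨w2, h2path, h2sum, h2supp⟩ :=
    down_ex r hG _ y (dist y r) (gp r y x) (dist_mem_lvls r y) (gp_mem_lvls r y x)
      (gp_le r y x) le_rfl
  have heq : mkW r hG y (gp r y x) (gp_mem_lvls r y x) = mkW r hG x (gp r x y) (gp_mem_lvls r x y) := by
    rw [mkW_eq_iff]
    exact ⟨(gp_comm r y x), le_of_eq rfl⟩
  let q : (TG r hG).Walk (mkW r hG x (gp r x y) (gp_mem_lvls r x y)) (fX r hG y) :=
    (w2.copy rfl heq).reverse
  refine ⟨w1.append q, ?_, ?_⟩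
  · show (w1.append q).IsPath
    rw [Walk.isPath_def, Walk.support_append, List.nodup_append]
    refine ⟨h1path.support_nodup, ?_, ?_⟩
    · exact (h2path.reverse.support_nodup.sublist (by
        simp only [q, Walk.support_reverse, Walk.support_copy]
        exact List.tail_sublist _))
    · -- disjointness
      intro v hv1 v' hv2 hvv'
      subst hvv'
      have hv2' : v ∈ q.support := List.mem_of_mem_tail hv2
      have hv2w2 : v ∈ w2.support := by
        simpa only [q, Walk.support_reverse, Walk.support_copy, List.mem_reverse] using hv2'
      obtain ⟨hb1, -, u, hu, hvx⟩ := h1supp v hv1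
      obtain ⟨hb2, -, u', hu', hvy⟩ := h2supp v hv2w2
      have hlvu : lv r hG v = u := by rw [hvx, lv_mkW]
      have hxy' : mkW r hG x u hu = mkW r hG y u' hu' := hvx.symm.trans hvy
      have hugp : u ≤ gp r x y := ((mkW_eq_iff r hG hu hu').mp hxy').2
      rw [hlvu] at hb1
      have hueq : u = gp r x y := le_antisymm hugp hb1
      -- so v is the junction, the head of q.support, contradicting nodup
      have hhead : v = mkW r hG x (gp r x y) (gp_mem_lvls r x y) := by
        rw [hvx, mkW_eq_iff]
        refine ⟨hueq, le_trans (mem_lvls_le hu) (le_of_eq (gp_self r x).symm)⟩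
      rw [hhead] at hv2
      have hnodup : q.support.Nodup := by
        simp only [q, Walk.support_reverse, Walk.support_copy]
        exact List.nodup_reverse.mpr h2path.support_nodup
      rw [Walk.support_eq_cons q] at hnodup
      exact (List.nodup_cons.mp hnodup).1 hv2
  · show ((w1.append q).edges.map (twt r hG)).sum = dist x y
    rw [Walk.edges_append, List.map_append, List.sum_append, h1sum]
    have : (q.edges.map (twt r hG)).sum = dist y r - gp r y x := by
      simp only [q, Walk.edges_reverse, Walk.edges_copy, List.map_reverse, List.sum_reverse]
      exact h2sum
    rw [this]
    unfold gp
    rw [dist_comm y x]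
    ring

end TreeConstr


/-- A finite metric space is a tree metric (embeds isometrically into a weighted tree,
modelled by a finite tree `T` with nonnegative edge weights `wt` and path-metric `dT`)
if and only if it has hyperbolicity 0, i.e., for every four points the two larger of
the three distance sums are equal (the four-point condition). -/
theorem tree_metric_iff_four_point_condition {X : Type} [Fintype X] [MetricSpace X] :
    (∃ (W : Type) (_ : Fintype W) (T : SimpleGraph W) (wt : Sym2 W → ℝ)
        (dT : W → W → ℝ) (f : X → W),
      T.IsTree ∧ (∀ e, 0 ≤ wt e) ∧
      (∀ (a b : W) (p : T.Walk a b), p.IsPath → dT a b = (p.edges.map wt).sum) ∧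
      (∀ x y : X, dist x y = dT (f x) (f y))) ↔
    (∀ u v w x : X, metricDelta4 u v w x = 0) := by
  constructor
  · rintro ⟨W, instW, T, wt, dT, f, hTree, hwt, hdT, hiso⟩ u v w x
    letI := instW
    letI := Classical.decEq W
    have h4 := fun a b c d => tree_fourpoint hTree wt hwt dT hdT (f a) (f b) (f c) (f d)
    have h1 : dist u v + dist w x ≤ max (dist u w + dist v x) (dist u x + dist v w) := by
      rw [hiso u v, hiso w x, hiso u w, hiso v x, hiso u x, hiso v w]
      exact h4 u v w x
    have h2 : dist u w + dist v x ≤ max (dist u v + dist w x) (dist u x + dist v w) := by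
      rw [dist_comm v w, hiso u w, hiso v x, hiso u v, hiso w x, hiso u x, hiso w v]
      exact h4 u w v x
    have h3 : dist u x + dist v w ≤ max (dist u v + dist w x) (dist u w + dist v x) := by
      rw [dist_comm w x, dist_comm v x, hiso u x, hiso v w, hiso u v, hiso x w, hiso u w,
        hiso x v]
      exact h4 u x v w
    simpa [metricDelta4] using delta_zero_of_ineqs _ _ _ h1 h2 h3
  · intro h
    by_cases hne : Nonempty X
    · have hyp4 : ∀ a b c d : X,
          dist a b + dist c d ≤ max (dist a c + dist b d) (dist a d + dist b c) := by
        intro a b c d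
        exact ineq_of_delta_zero _ _ _ (by simpa [metricDelta4] using h a b c d)
      letI := hne
      set r := Classical.arbitrary X with hr
      have hG : ∀ x y z : X,
          min (TreeConstr.gp r x z) (TreeConstr.gp r z y) ≤ TreeConstr.gp r x y := by
        intro x y z
        rw [min_le_iff]
        have h4 := hyp4 r z x y
        rw [le_max_iff] at h4
        have c1 : dist r z = dist z r := dist_comm r z
        have c2 : dist r x = dist x r := dist_comm r x
        have c3 : dist r y = dist y r := dist_comm r y
        have c4 : dist z x = dist x z := dist_comm z x
        have c5 : dist z y = dist y z := dist_comm z y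
        unfold TreeConstr.gp
        rcases h4 with h' | h'
        · right; linarith
        · left; linarith
      letI : DecidableEq (TreeConstr.WQ r hG) := Classical.decEq _
      refine ⟨TreeConstr.WQ r hG, inferInstance, TreeConstr.TG r hG, TreeConstr.twt r hG,
        (fun a b => (((TreePth (TreeConstr.TG_isTree r hG) a b).edges.map
          (TreeConstr.twt r hG)).sum)),
        TreeConstr.fX r hG, TreeConstr.TG_isTree r hG, TreeConstr.twt_nonneg r hG, ?_, ?_⟩
      · intro a b p hp
        show ((TreePth (TreeConstr.TG_isTree r hG) a b).edges.map (TreeConstr.twt r hG)).sum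
          = (p.edges.map (TreeConstr.twt r hG)).sum
        rw [TreePth_unique (TreeConstr.TG_isTree r hG) p hp]
      · intro x y
        obtain ⟨w, hwp, hws⟩ := TreeConstr.dist_path_ex r hG x y
        show dist x y = ((TreePth (TreeConstr.TG_isTree r hG) (TreeConstr.fX r hG x)
          (TreeConstr.fX r hG y)).edges.map (TreeConstr.twt r hG)).sum
        rw [← TreePth_unique (TreeConstr.TG_isTree r hG) w hwp]
        exact hws.symm
    · refine ⟨PUnit, inferInstance, ⊥, fun _ => 0, fun _ _ => 0, fun _ => PUnit.unit,
        ?_, ?_, ?_, ?_⟩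
      · constructor
        · rw [SimpleGraph.connected_iff]
          exact ⟨fun a b => (Subsingleton.elim a b) ▸ SimpleGraph.Reachable.refl a,
            ⟨PUnit.unit⟩⟩
        · exact SimpleGraph.isAcyclic_bot
      · intro e; exact le_refl 0
      · intro a b p hp
        simp
      · intro x y
        exact absurd ⟨x⟩ hne
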